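/- The unique solution f : [0,T_c] → [0,∞) of the gap equation F(T, f(T)) = 0 (with f(0) = Δ² and f(T_c) = 0) is strictly decreasing on [0, T_c]: if 0 ≤ T₁ < T₂ ≤ T_c then f(T₁) > f(T₂). -/

import Mathlib

open Real intervalIntegral

private lemma continuous_tanh' : Continuous Real.tanh := by
  have : Real.tanh = fun x => Real.sinh x / Real.cosh x := by
    funext x; exact Real.tanh_eq_sinh_div_cosh x
  rw [this]
  exact Real.continuous_sinh.div Real.continuous_cosh fun x => (Real.cosh_pos x).ne'

private lemma tanh_lt_one' (x : ℝ) : Real.tanh x < 1 := by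
  rw [Real.tanh_eq_sinh_div_cosh, div_lt_one (Real.cosh_pos x)]
  exact Real.sinh_lt_cosh x

private lemma tanh_strictMono' : StrictMono Real.tanh := by
  intro x y hxy
  rw [Real.tanh_eq_sinh_div_cosh, Real.tanh_eq_sinh_div_cosh,
    div_lt_div_iff₀ (Real.cosh_pos x) (Real.cosh_pos y)]
  have h : Real.sinh (x - y) < 0 := by
    have := Real.sinh_lt_sinh.mpr (show x - y < 0 by linarith)
    simpa using this
  rw [Real.sinh_sub] at h
  linarith

private lemma hasDerivAt_tanh' (x : ℝ) :
    HasDerivAt Real.tanh (1 / Real.cosh x ^ 2) x := by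
  have h := (Real.hasDerivAt_sinh x).div (Real.hasDerivAt_cosh x) (Real.cosh_pos x).ne'
  have heq : (Real.sinh / Real.cosh) = Real.tanh := by
    funext y; exact (Real.tanh_eq_sinh_div_cosh y).symm
  rw [heq] at h
  have := Real.cosh_sq_sub_sinh_sq x
  have e : (Real.cosh x * Real.cosh x - Real.sinh x * Real.sinh x) / Real.cosh x ^ 2
      = 1 / Real.cosh x ^ 2 := by
    congr 1
    linarith
  rw [e] at h
  exact h

private lemma tanh_div_antitoneOn :
    AntitoneOn (fun x => Real.tanh x / x) (Set.Ioi (0:ℝ)) := by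
  have hint : interior (Set.Ioi (0:ℝ)) = Set.Ioi 0 := interior_Ioi
  have hd : ∀ x ∈ Set.Ioi (0:ℝ),
      HasDerivAt (fun x => Real.tanh x / x)
        ((1 / Real.cosh x ^ 2 * x - Real.tanh x * 1) / x ^ 2) x := by
    intro x hx
    exact (hasDerivAt_tanh' x).div (hasDerivAt_id x) (ne_of_gt hx)
  apply antitoneOn_of_deriv_nonpos (convex_Ioi 0)
  · exact (continuous_tanh'.continuousOn).div continuousOn_id
      (fun x hx => ne_of_gt hx)
  · rw [hint]
    exact fun x hx => ((hd x hx).differentiableAt).differentiableWithinAt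
  · rw [hint]
    intro x hx
    rw [(hd x hx).deriv]
    have hx0 : (0:ℝ) < x := hx
    have hch : (1:ℝ) ≤ Real.cosh x := Real.one_le_cosh x
    have hsh : x < Real.sinh x := Real.self_lt_sinh_iff.mpr hx0
    have htanh : Real.tanh x * Real.cosh x = Real.sinh x := by
      rw [Real.tanh_eq_sinh_div_cosh]
      field_simp
    have hnum : 1 / Real.cosh x ^ 2 * x - Real.tanh x * 1 ≤ 0 := by
      rw [sub_nonpos, div_mul_eq_mul_div, div_le_iff₀ (by positivity)]
      have hsinh0 : 0 < Real.sinh x := Real.sinh_pos_iff.mpr hx0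
      nlinarith [htanh, hsh, hch, hsinh0]
    have hx2 : (0:ℝ) < x ^ 2 := by positivity
    exact div_nonpos_of_nonpos_of_nonneg hnum hx2.le

/-- `tanh (s/d) / s` is nonincreasing in `s > 0`, for fixed `d > 0`. -/
private lemma tanh_div_anti {d s₁ s₂ : ℝ} (hd : 0 < d) (h1 : 0 < s₁) (h12 : s₁ ≤ s₂) :
    Real.tanh (s₂/d) / s₂ ≤ Real.tanh (s₁/d) / s₁ := by
  have h2 : 0 < s₂ := lt_of_lt_of_le h1 h12
  have ha : s₁ / d ∈ Set.Ioi (0:ℝ) := by simp [div_pos h1 hd]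
  have hb : s₂ / d ∈ Set.Ioi (0:ℝ) := by simp [div_pos h2 hd]
  have hle : s₁ / d ≤ s₂ / d := by gcongr
  have this : Real.tanh (s₂/d) / (s₂/d) ≤ Real.tanh (s₁/d) / (s₁/d) :=
    tanh_div_antitoneOn ha hb hle
  have e1 : Real.tanh (s₁/d) / (s₁/d) = d * (Real.tanh (s₁/d) / s₁) := by
    field_simp
  have e2 : Real.tanh (s₂/d) / (s₂/d) = d * (Real.tanh (s₂/d) / s₂) := by
    field_simp
  rw [e1, e2] at this
  exact le_of_mul_le_mul_left this hd

private lemma tanh_div_anti' {d s₁ s₂ : ℝ} (hd : 0 < d) (h1 : 0 < s₁) (h12 : s₁ ≤ s₂) :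
    (1/s₂) * Real.tanh (s₂/d) ≤ (1/s₁) * Real.tanh (s₁/d) := by
  rw [one_div, one_div, inv_mul_eq_div, inv_mul_eq_div]
  exact tanh_div_anti hd h1 h12

/-- The solution `f` of the gap equation (with `f(0) = Δ²` and `f(T_c) = 0`)
is strictly decreasing on `[0,T_c]`. -/
theorem gap_function_strictAnti
    (kB hbar ωD U0 N0 ε Tc Δ : ℝ) (f : ℝ → ℝ)
    (hkB : 0 < kB) (hhbar : 0 < hbar) (hωD : 0 < ωD)
    (hU0 : 0 < U0) (hN0 : 0 < N0) (hε : 0 < ε) (hTc : 0 < Tc)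
    (hcut : 2*kB*Tc*ε < hbar*ωD) (hΔ : 0 < Δ)
    (hf_cont : ContinuousOn f (Set.Icc 0 Tc))
    (hf_nonneg : ∀ T ∈ Set.Icc (0:ℝ) Tc, 0 ≤ f T)
    (hf0 : f 0 = Δ^2) (hfTc : f Tc = 0)
    (hgap0 : (∫ ξ in (2*kB*Tc*ε)..(hbar*ωD), 1/Real.sqrt (ξ^2 + Δ^2)) = 1/(U0*N0))
    (hgap : ∀ T ∈ Set.Ioc (0:ℝ) Tc,
      (∫ ξ in (2*kB*Tc*ε)..(hbar*ωD),
        (1/Real.sqrt (ξ^2 + f T)) * Real.tanh (Real.sqrt (ξ^2 + f T)/(2*kB*T)))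
        = 1/(U0*N0)) :
    StrictAntiOn f (Set.Icc 0 Tc) := by
  intro T₁ h₁ T₂ h₂ h12
  set a := 2*kB*Tc*ε with ha_def
  set b := hbar*ωD with hb_def
  have ha : 0 < a := by positivity
  have hab : a < b := hcut
  -- square-root helper facts
  have hsqc : ∀ Y : ℝ, Continuous fun ξ : ℝ => Real.sqrt (ξ^2 + Y) := fun Y =>
    (((continuous_pow 2).add continuous_const)).sqrt
  have hsqpos : ∀ (Y : ℝ), 0 ≤ Y → ∀ ξ ∈ Set.Icc a b, 0 < Real.sqrt (ξ^2 + Y) := by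
    intro Y hY ξ hξ
    have : 0 < ξ := lt_of_lt_of_le ha hξ.1
    exact Real.sqrt_pos.mpr (by nlinarith)
  -- continuity of the main integrand
  have hcont : ∀ (Y T : ℝ), 0 ≤ Y →
      ContinuousOn (fun ξ => (1/Real.sqrt (ξ^2 + Y)) *
        Real.tanh (Real.sqrt (ξ^2 + Y)/(2*kB*T))) (Set.Icc a b) := by
    intro Y T hY
    refine ContinuousOn.mul ?_ ?_
    · exact continuousOn_const.div ((hsqc Y).continuousOn)
        (fun ξ hξ => (hsqpos Y hY ξ hξ).ne')
    · exact (continuous_tanh'.comp ((hsqc Y).div_const _)).continuousOn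
  by_contra hcon
  have hle : f T₁ ≤ f T₂ := not_lt.mp hcon
  have hT₁0 : 0 ≤ T₁ := h₁.1
  have hT₂pos : 0 < T₂ := lt_of_le_of_lt hT₁0 h12
  have hT₂mem : T₂ ∈ Set.Ioc (0:ℝ) Tc := ⟨hT₂pos, h₂.2⟩
  have hY₂ : 0 ≤ f T₂ := hf_nonneg T₂ h₂
  have hI₂ := hgap T₂ hT₂mem
  rcases eq_or_lt_of_le hT₁0 with hT₁eq | hT₁pos
  · -- case T₁ = 0 : compare with the zero-temperature gap equation
    have hY₁ : f T₁ = Δ^2 := by rw [← hT₁eq, hf0]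
    have hΔle : Δ^2 ≤ f T₂ := by rw [← hY₁]; exact hle
    have hlt : (∫ ξ in a..b,
        (1/Real.sqrt (ξ^2 + f T₂)) * Real.tanh (Real.sqrt (ξ^2 + f T₂)/(2*kB*T₂)))
        < ∫ ξ in a..b, 1/Real.sqrt (ξ^2 + Δ^2) := by
      refine integral_lt_integral_of_continuousOn_of_le_of_exists_lt hab
        (hcont (f T₂) T₂ hY₂)
        (show ContinuousOn (fun ξ => 1/Real.sqrt (ξ^2 + Δ^2)) (Set.Icc a b) from
          continuousOn_const.div ((hsqc (Δ^2)).continuousOn)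
          (fun ξ hξ => (hsqpos (Δ^2) (by positivity) ξ hξ).ne')) ?_ ?_
      · intro ξ hξ
        have hξ' : ξ ∈ Set.Icc a b := ⟨hξ.1.le, hξ.2⟩
        have hs2 : 0 < Real.sqrt (ξ^2 + f T₂) := hsqpos _ hY₂ ξ hξ'
        have hs1 : 0 < Real.sqrt (ξ^2 + Δ^2) := hsqpos _ (by positivity) ξ hξ'
        have hs12 : Real.sqrt (ξ^2 + Δ^2) ≤ Real.sqrt (ξ^2 + f T₂) :=
          Real.sqrt_le_sqrt (by linarith)
        have h1 : (1/Real.sqrt (ξ^2 + f T₂)) *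
            Real.tanh (Real.sqrt (ξ^2 + f T₂)/(2*kB*T₂))
            ≤ (1/Real.sqrt (ξ^2 + f T₂)) * 1 := by
          apply mul_le_mul_of_nonneg_left (tanh_lt_one' _).le (by positivity)
        have h2 : (1/Real.sqrt (ξ^2 + f T₂)) * 1 ≤ 1/Real.sqrt (ξ^2 + Δ^2) := by
          rw [mul_one]
          exact one_div_le_one_div_of_le hs1 hs12
        linarith
      · refine ⟨a, ⟨le_refl a, hab.le⟩, ?_⟩
        have hξ' : a ∈ Set.Icc a b := ⟨le_refl a, hab.le⟩
        have hs2 : 0 < Real.sqrt (a^2 + f T₂) := hsqpos _ hY₂ a hξ'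
        have hs1 : 0 < Real.sqrt (a^2 + Δ^2) := hsqpos _ (by positivity) a hξ'
        have hs12 : Real.sqrt (a^2 + Δ^2) ≤ Real.sqrt (a^2 + f T₂) :=
          Real.sqrt_le_sqrt (by linarith)
        have h1 : (1/Real.sqrt (a^2 + f T₂)) *
            Real.tanh (Real.sqrt (a^2 + f T₂)/(2*kB*T₂))
            < (1/Real.sqrt (a^2 + f T₂)) * 1 :=
          mul_lt_mul_of_pos_left (tanh_lt_one' _) (by positivity)
        have h2 : (1/Real.sqrt (a^2 + f T₂)) * 1 ≤ 1/Real.sqrt (a^2 + Δ^2) := by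
          rw [mul_one]
          exact one_div_le_one_div_of_le hs1 hs12
        linarith
    rw [hI₂, hgap0] at hlt
    exact lt_irrefl _ hlt
  · -- case T₁ > 0 : the integrand is strictly bigger at T₁
    have hT₁mem : T₁ ∈ Set.Ioc (0:ℝ) Tc := ⟨hT₁pos, h₁.2⟩
    have hY₁ : 0 ≤ f T₁ := hf_nonneg T₁ h₁
    have hI₁ := hgap T₁ hT₁mem
    have hlt : (∫ ξ in a..b,
        (1/Real.sqrt (ξ^2 + f T₂)) * Real.tanh (Real.sqrt (ξ^2 + f T₂)/(2*kB*T₂)))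
        < ∫ ξ in a..b,
        (1/Real.sqrt (ξ^2 + f T₁)) * Real.tanh (Real.sqrt (ξ^2 + f T₁)/(2*kB*T₁)) := by
      have key : ∀ ξ ∈ Set.Icc a b,
          (1/Real.sqrt (ξ^2 + f T₂)) * Real.tanh (Real.sqrt (ξ^2 + f T₂)/(2*kB*T₂))
          < (1/Real.sqrt (ξ^2 + f T₁)) * Real.tanh (Real.sqrt (ξ^2 + f T₁)/(2*kB*T₁)) := by
        intro ξ hξ
        have hs1 : 0 < Real.sqrt (ξ^2 + f T₁) := hsqpos _ hY₁ ξ hξ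
        have hs2 : 0 < Real.sqrt (ξ^2 + f T₂) := hsqpos _ hY₂ ξ hξ
        have hs12 : Real.sqrt (ξ^2 + f T₁) ≤ Real.sqrt (ξ^2 + f T₂) :=
          Real.sqrt_le_sqrt (by linarith)
        have hd1 : (0:ℝ) < 2*kB*T₁ := by positivity
        have hd2 : (0:ℝ) < 2*kB*T₂ := by positivity
        -- strict monotonicity in T
        have harg : Real.sqrt (ξ^2 + f T₂)/(2*kB*T₂)
            < Real.sqrt (ξ^2 + f T₂)/(2*kB*T₁) := by
          apply div_lt_div_of_pos_left hs2 hd1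
          nlinarith
        have hstep1 : (1/Real.sqrt (ξ^2 + f T₂)) *
            Real.tanh (Real.sqrt (ξ^2 + f T₂)/(2*kB*T₂))
            < (1/Real.sqrt (ξ^2 + f T₂)) *
            Real.tanh (Real.sqrt (ξ^2 + f T₂)/(2*kB*T₁)) :=
          mul_lt_mul_of_pos_left (tanh_strictMono' harg) (by positivity)
        have hstep2 : (1/Real.sqrt (ξ^2 + f T₂)) *
            Real.tanh (Real.sqrt (ξ^2 + f T₂)/(2*kB*T₁))
            ≤ (1/Real.sqrt (ξ^2 + f T₁)) *
            Real.tanh (Real.sqrt (ξ^2 + f T₁)/(2*kB*T₁)) :=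
          tanh_div_anti' hd1 hs1 hs12
        linarith
      apply integral_lt_integral_of_continuousOn_of_le_of_exists_lt hab
        (hcont (f T₂) T₂ hY₂) (hcont (f T₁) T₁ hY₁)
      · exact fun ξ hξ => (key ξ ⟨hξ.1.le, hξ.2⟩).le
      · exact ⟨a, ⟨le_refl a, hab.le⟩, key a ⟨le_refl a, hab.le⟩⟩
    rw [hI₁, hI₂] at hlt
    exact lt_irrefl _ hlt
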